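/- Assume δ_{k0+1} < 1/√(k0+1). Then lim_{σ²→0} P(k_min = k0) = 1 (equivalently lim_{σ²→0} P(S_{k_min} = S) = 1), and RR(k0) converges to 0 in probability as σ² → 0, i.e., for every ε > 0, lim_{σ²→0} P(RR(k0) < ε) = 1. -/

import Mathlib

open MeasureTheory ProbabilityTheory Filter
open scoped ENNReal NNReal

set_option maxHeartbeats 1000000
noncomputable section

namespace RRTPaper

variable {n p : ℕ}

/-- The support of a coefficient vector as a `Finset`. -/
def suppF {p : ℕ} (β : Fin p → ℝ) : Finset (Fin p) :=
  Finset.univ.filter fun j => β j ≠ 0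

/-- `β_min`: the smallest absolute value of `β` on its support. -/
def betaMin {p : ℕ} (β : Fin p → ℝ) : ℝ :=
  sInf ((fun j => |β j|) '' {j | β j ≠ 0})

/-- `β_max`: the largest absolute value of `β` on its support. -/
def betaMax {p : ℕ} (β : Fin p → ℝ) : ℝ :=
  sSup ((fun j => |β j|) '' {j | β j ≠ 0})

/-- The ℓ2 norm of a coefficient vector. -/
def l2norm {p : ℕ} (b : Fin p → ℝ) : ℝ := Real.sqrt (∑ j, (b j) ^ 2)

/-- The design matrix (given by its columns `X j ∈ ℝⁿ`) applied to a coefficient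
vector: `Xb = ∑ j, b j • X j`. -/
def applyX (X : Fin p → EuclideanSpace ℝ (Fin n)) (b : Fin p → ℝ) :
    EuclideanSpace ℝ (Fin n) := ∑ j, b j • X j

/-- The set of admissible restricted isometry constants of order `s`:
`δ ≥ 0` such that `(1−δ)‖b‖₂² ≤ ‖Xb‖₂² ≤ (1+δ)‖b‖₂²` for every `b` with at most `s`
nonzero entries. -/
def ripSet (X : Fin p → EuclideanSpace ℝ (Fin n)) (s : ℕ) : Set ℝ :=
  {δ : ℝ | 0 ≤ δ ∧ ∀ b : Fin p → ℝ, (suppF b).card ≤ s →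
    (1 - δ) * (l2norm b) ^ 2 ≤ ‖applyX X b‖ ^ 2 ∧
      ‖applyX X b‖ ^ 2 ≤ (1 + δ) * (l2norm b) ^ 2}

/-- The restricted isometry constant `δ_s` of order `s` (the smallest admissible `δ`). -/
def RIC (X : Fin p → EuclideanSpace ℝ (Fin n)) (s : ℕ) : ℝ := sInf (ripSet X s)

/-- The OMP support estimate `S_k` after `k` iterations, given the sequence `t` of
selected indices (`t k` is the index selected at iteration `k+1`). -/
def ompSupport {p : ℕ} (t : ℕ → Fin p) (k : ℕ) : Finset (Fin p) :=
  (Finset.range k).image t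

/-- The OMP residual `r^k = y − P_k y`, where `P_k` is the orthogonal projection onto
the span of the columns indexed by `S_k`. -/
def ompResidual (X : Fin p → EuclideanSpace ℝ (Fin n)) (y : EuclideanSpace ℝ (Fin n))
    (t : ℕ → Fin p) (k : ℕ) : EuclideanSpace ℝ (Fin n) :=
  y - ↑(Submodule.orthogonalProjectionOnto (Submodule.span ℝ (X '' ↑(ompSupport t k))) y)

/-- `t` is a valid OMP selection sequence for design `X` and observation `y`:
at every iteration the selected index maximizes the absolute correlation with the
current residual. -/
def IsOMP (X : Fin p → EuclideanSpace ℝ (Fin n)) (y : EuclideanSpace ℝ (Fin n))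
    (t : ℕ → Fin p) : Prop :=
  ∀ k : ℕ, ∀ j : Fin p,
    |(inner ℝ (X j) (ompResidual X y t k) : ℝ)| ≤
      |(inner ℝ (X (t k)) (ompResidual X y t k) : ℝ)|

/-- The residual ratio statistic `RR(k) = ‖r^k‖₂ / ‖r^{k−1}‖₂`. -/
def resRatio (X : Fin p → EuclideanSpace ℝ (Fin n)) (y : EuclideanSpace ℝ (Fin n))
    (t : ℕ → Fin p) (k : ℕ) : ℝ :=
  ‖ompResidual X y t k‖ / ‖ompResidual X y t (k - 1)‖

/-- `k_min`: the first `1 ≤ k ≤ k_max` with `S ⊆ S_k` (`⊤ = ∞` if there is none). -/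
def kmin {p : ℕ} (t : ℕ → Fin p) (β : Fin p → ℝ) (kmax : ℕ) : ℕ∞ :=
  sInf ((fun k : ℕ => (k : ℕ∞)) ''
    {k | 1 ≤ k ∧ k ≤ kmax ∧ suppF β ⊆ ompSupport t k})

/-- The Beta function `B(a,b)`. -/
def betaFun (a b : ℝ) : ℝ := Real.Gamma a * Real.Gamma b / Real.Gamma (a + b)

/-- The CDF of the Beta(a,b) distribution. -/
def betaCDF (a b x : ℝ) : ℝ :=
  (1 / betaFun a b) * ∫ u in (0:ℝ)..x, u ^ (a - 1) * (1 - u) ^ (b - 1)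

/-- The inverse of the Beta(a,b) CDF on (0,1) (as a generalized inverse). -/
def betaICDF (a b z : ℝ) : ℝ := sInf {x : ℝ | 0 ≤ x ∧ z ≤ betaCDF a b x}

/-- The residual ratio threshold `Γ_RRT^α(k)`. -/
def GammaRRT (n p kmax : ℕ) (α : ℝ) (k : ℕ) : ℝ :=
  Real.sqrt (betaICDF (((n : ℝ) - k) / 2) (1 / 2)
    (α / ((kmax : ℝ) * ((p : ℝ) - k + 1))))

/-- `k_RRT = max{1 ≤ k ≤ k_max : RR(k) < Γ_RRT^α(k)}` (`0`, giving `S_RRT = ∅`,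
if the set is empty). -/
def kRRT (X : Fin p → EuclideanSpace ℝ (Fin n)) (y : EuclideanSpace ℝ (Fin n))
    (t : ℕ → Fin p) (kmax : ℕ) (α : ℝ) : ℕ :=
  WithBot.unbotD 0 ((Finset.Icc 1 kmax).filter fun k =>
    resRatio X y t k < GammaRRT n p kmax α k).max

/-- `k_RRM`: the smallest minimizer of `RR(k)` over `1 ≤ k ≤ k_max`. -/
def kRRM (X : Fin p → EuclideanSpace ℝ (Fin n)) (y : EuclideanSpace ℝ (Fin n))
    (t : ℕ → Fin p) (kmax : ℕ) : ℕ :=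
  sInf {k | k ∈ Finset.Icc 1 kmax ∧
    ∀ j ∈ Finset.Icc 1 kmax, resRatio X y t k ≤ resRatio X y t j}

/-- `min_{1 ≤ k ≤ k_max} RR(k)`. -/
def minRR (X : Fin p → EuclideanSpace ℝ (Fin n)) (y : EuclideanSpace ℝ (Fin n))
    (t : ℕ → Fin p) (kmax : ℕ) : ℝ :=
  sInf (resRatio X y t '' Set.Icc 1 kmax)

/-- The adaptive RRT parameter `α* = min(PFD_finite, (min_k RR(k))^q)`. -/
def alphaStar (X : Fin p → EuclideanSpace ℝ (Fin n)) (y : EuclideanSpace ℝ (Fin n))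
    (t : ℕ → Fin p) (kmax : ℕ) (PFD q : ℝ) : ℝ :=
  min PFD (minRR X y t kmax ^ q)

/-- `k_RRTA`: RRT with the adapted parameter `α*`. -/
def kRRTA (X : Fin p → EuclideanSpace ℝ (Fin n)) (y : EuclideanSpace ℝ (Fin n))
    (t : ℕ → Fin p) (kmax : ℕ) (PFD q : ℝ) : ℕ :=
  kRRT X y t kmax (alphaStar X y t kmax PFD q)

/-- `ε_omp` from Lemma 1 of the paper. -/
def epsOMP (X : Fin p → EuclideanSpace ℝ (Fin n)) (β : Fin p → ℝ) (k0 : ℕ) : ℝ :=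
  betaMin β * Real.sqrt (1 - RIC X (k0 + 1)) *
    (1 - Real.sqrt ((k0 : ℝ) + 1) * RIC X (k0 + 1)) /
    (1 + Real.sqrt (1 - RIC X (k0 + 1) ^ 2) - Real.sqrt ((k0 : ℝ) + 1) * RIC X (k0 + 1))

/-- `ε_σ = σ √(n + 2 √(n log n))`. -/
def epsSigma (n : ℕ) (σ : ℝ) : ℝ :=
  σ * Real.sqrt ((n : ℝ) + 2 * Real.sqrt ((n : ℝ) * Real.log (n : ℝ)))

/-- The distribution of the noise vector `w ~ N(0, σ² Iₙ)` on `ℝⁿ`. -/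
def noise (n : ℕ) (σ : ℝ) : Measure (EuclideanSpace ℝ (Fin n)) :=
  (Measure.pi fun _ : Fin n => gaussianReal 0 ⟨σ ^ 2, sq_nonneg σ⟩).map
    (MeasurableEquiv.toLp 2 (Fin n → ℝ))

lemma mem_suppF {β : Fin p → ℝ} {j : Fin p} : j ∈ suppF β ↔ β j ≠ 0 := by
  simp [suppF]

lemma l2norm_sq {b : Fin p → ℝ} : l2norm b ^ 2 = ∑ j, (b j) ^ 2 :=
  Real.sq_sqrt (by positivity)

lemma applyX_add (X : Fin p → EuclideanSpace ℝ (Fin n)) (a b : Fin p → ℝ) :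
    applyX X (a + b) = applyX X a + applyX X b := by
  simp [applyX, add_smul, Finset.sum_add_distrib]

lemma applyX_smul (X : Fin p → EuclideanSpace ℝ (Fin n)) (t : ℝ) (b : Fin p → ℝ) :
    applyX X (t • b) = t • applyX X b := by
  simp [applyX, Finset.smul_sum, smul_smul]

lemma applyX_sub (X : Fin p → EuclideanSpace ℝ (Fin n)) (a b : Fin p → ℝ) :
    applyX X (a - b) = applyX X a - applyX X b := by
  simp [applyX, sub_smul, Finset.sum_sub_distrib]

lemma applyX_single (X : Fin p → EuclideanSpace ℝ (Fin n)) (j : Fin p) (t : ℝ) :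
    applyX X (Pi.single j t) = t • X j := by
  unfold applyX
  rw [Finset.sum_eq_single j]
  · simp
  · intro i _ hij; simp [Pi.single_apply, hij]
  · simp

lemma inner_applyX_right (X : Fin p → EuclideanSpace ℝ (Fin n))
    (y : EuclideanSpace ℝ (Fin n)) (b : Fin p → ℝ) :
    (inner ℝ y (applyX X b) : ℝ) = ∑ j, b j * (inner ℝ y (X j) : ℝ) := by
  simp only [applyX, inner_sum, real_inner_smul_right]

lemma norm_applyX_le_l1 (X : Fin p → EuclideanSpace ℝ (Fin n)) (hX : ∀ j, ‖X j‖ = 1)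
    (b : Fin p → ℝ) : ‖applyX X b‖ ≤ ∑ j ∈ suppF b, |b j| := by
  have h1 : applyX X b = ∑ j ∈ suppF b, b j • X j := by
    rw [applyX, ← Finset.sum_subset (Finset.subset_univ (suppF b))]
    intro x _ hx
    rw [mem_suppF, not_not] at hx
    simp [hx]
  rw [h1]
  refine (norm_sum_le _ _).trans_eq ?_
  refine Finset.sum_congr rfl fun j _ => ?_
  rw [norm_smul, hX, mul_one, Real.norm_eq_abs]

lemma l1_sq_le_card_mul_l2_sq (b : Fin p → ℝ) :
    (∑ j ∈ suppF b, |b j|) ^ 2 ≤ ((suppF b).card : ℝ) * l2norm b ^ 2 := by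
  refine (sq_sum_le_card_mul_sum_sq).trans ?_
  rw [l2norm_sq]
  have hc : (0:ℝ) ≤ ((suppF b).card : ℝ) := by positivity
  refine mul_le_mul_of_nonneg_left ?_ hc
  calc ∑ j ∈ suppF b, |b j| ^ 2 = ∑ j ∈ suppF b, b j ^ 2 := by
        simp [sq_abs]
      _ ≤ ∑ j, b j ^ 2 := Finset.sum_le_sum_of_subset_of_nonneg
        (Finset.subset_univ _) (fun i _ _ => sq_nonneg _)

lemma ripSet_nonempty (X : Fin p → EuclideanSpace ℝ (Fin n)) (hX : ∀ j, ‖X j‖ = 1)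
    (s : ℕ) (hs : 1 ≤ s) : ((s : ℝ)) ∈ ripSet X s := by
  refine ⟨by positivity, fun b hb => ?_⟩
  have hnorm : ‖applyX X b‖ ^ 2 ≤ (s : ℝ) * l2norm b ^ 2 := by
    have h1 := norm_applyX_le_l1 X hX b
    have h2 := l1_sq_le_card_mul_l2_sq b
    have h3 : ‖applyX X b‖ ^ 2 ≤ (∑ j ∈ suppF b, |b j|) ^ 2 := by
      have : (0:ℝ) ≤ ∑ j ∈ suppF b, |b j| := Finset.sum_nonneg fun _ _ => abs_nonneg _
      nlinarith [norm_nonneg (applyX X b)]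
    refine h3.trans (h2.trans ?_)
    refine mul_le_mul_of_nonneg_right ?_ (sq_nonneg _)
    exact_mod_cast hb
  constructor
  · have h4 : (1 - (s:ℝ)) * l2norm b ^ 2 ≤ 0 := by
      apply mul_nonpos_of_nonpos_of_nonneg
      · simp; exact_mod_cast hs
      · positivity
    exact h4.trans (sq_nonneg _)
  · refine hnorm.trans ?_
    have : (0:ℝ) ≤ l2norm b ^ 2 := sq_nonneg _
    nlinarith

lemma exists_rip_lt (X : Fin p → EuclideanSpace ℝ (Fin n)) (hX : ∀ j, ‖X j‖ = 1)
    {s : ℕ} (hs : 1 ≤ s) {r : ℝ} (h : RIC X s < r) :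
    ∃ δ ∈ ripSet X s, δ < r :=
  exists_lt_of_csInf_lt ⟨_, ripSet_nonempty X hX s hs⟩ h
/-- Mo's sharp inequality: for `δ ∈ ripSet X (k0+1)` and `u` supported on at most `k0`
indices, and any `j` outside the support of `u`,
`‖u‖₂²(1 − δ√(k0+1)) ≤ ‖Xu‖² − ‖u‖₁·|⟨X_j, Xu⟩|`. -/
lemma core_ineq (X : Fin p → EuclideanSpace ℝ (Fin n)) (k0 : ℕ) (δ : ℝ)
    (hδ : δ ∈ ripSet X (k0 + 1)) (u : Fin p → ℝ) (hucard : (suppF u).card ≤ k0)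
    (j : Fin p) (hj : j ∉ suppF u) :
    (∑ i, u i ^ 2) * (1 - δ * Real.sqrt ((k0 : ℝ) + 1)) ≤
      ‖applyX X u‖ ^ 2 -
        (∑ i ∈ suppF u, |u i|) * |(inner ℝ (X j) (applyX X u) : ℝ)| := by
  obtain ⟨hδ0, hrip⟩ := hδ
  set α := Real.sqrt ((k0 : ℝ) + 1) with hα_def
  have hαsq : α ^ 2 = (k0 : ℝ) + 1 := Real.sq_sqrt (by positivity)
  have hαpos : 0 < α := Real.sqrt_pos.2 (by positivity)
  have huj : u j = 0 := by rwa [mem_suppF, not_not] at hj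
  set N2 := ∑ i, u i ^ 2 with hN2_def
  have hN2 : 0 ≤ N2 := by positivity
  set c := ∑ i ∈ suppF u, |u i| with hc_def
  set r := applyX X u with hr_def
  set ip := (inner ℝ (X j) r : ℝ) with hip_def
  set sg : ℝ := if 0 ≤ ip then 1 else -1 with hsg_def
  have hsgip : sg * ip = |ip| := by
    rw [hsg_def]
    split_ifs with h
    · rw [one_mul, abs_of_nonneg h]
    · rw [abs_of_neg (lt_of_not_ge h)]; ring
  have hsg2 : sg ^ 2 = 1 := by rw [hsg_def]; split_ifs <;> norm_num
  -- the family of test vectors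
  set w : ℝ → ℝ → (Fin p → ℝ) := fun t s' => t • u + s' • (Pi.single j 1 : Fin p → ℝ) with hw_def
  have hw_apply : ∀ t s' i, w t s' i = t * u i + s' * (Pi.single j 1 : Fin p → ℝ) i := by
    intro t s' i; simp [hw_def]
  have hsupp : ∀ t s', (suppF (w t s')).card ≤ k0 + 1 := by
    intro t s'
    have hsub : suppF (w t s') ⊆ insert j (suppF u) := by
      intro i hi
      rw [mem_suppF] at hi
      by_cases hij : i = j
      · simp [hij]
      · refine Finset.mem_insert_of_mem ?_
        rw [mem_suppF]
        intro h0
        apply hi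
        rw [hw_apply, h0, Pi.single_eq_of_ne hij]
        ring
    calc (suppF (w t s')).card ≤ (insert j (suppF u)).card := Finset.card_le_card hsub
      _ ≤ (suppF u).card + 1 := Finset.card_insert_le _ _
      _ ≤ k0 + 1 := by omega
  have hl2 : ∀ t s', l2norm (w t s') ^ 2 = t ^ 2 * N2 + s' ^ 2 := by
    intro t s'
    rw [l2norm_sq]
    have h1 : ∀ i ∈ Finset.univ.erase j, w t s' i ^ 2 = t ^ 2 * u i ^ 2 := by
      intro i hi
      rw [hw_apply, Pi.single_eq_of_ne (Finset.ne_of_mem_erase hi)]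
      ring
    rw [← Finset.sum_erase_add _ _ (Finset.mem_univ j), Finset.sum_congr rfl h1,
      ← Finset.mul_sum]
    have h2 : ∑ i ∈ Finset.univ.erase j, u i ^ 2 = N2 := by
      rw [hN2_def, ← Finset.sum_erase_add _ _ (Finset.mem_univ j), huj]
      ring
    rw [h2, hw_apply, huj, Pi.single_eq_same]
    ring
  have happ : ∀ t s', applyX X (w t s') = t • r + s' • X j := by
    intro t s'
    rw [hw_def]
    simp only
    rw [applyX_add, applyX_smul, applyX_smul, applyX_single, smul_smul, mul_one, hr_def]
  -- the two RIP bounds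
  set A := α • r with hA_def
  set B := r - (c * sg) • X j with hB_def
  have h1 : applyX X (w (α + 1) (-(c * sg))) = A + B := by
    rw [happ, hA_def, hB_def, add_smul, one_smul, neg_smul]
    abel
  have h2 : applyX X (w (α - 1) (c * sg)) = A - B := by
    rw [happ, hA_def, hB_def, sub_smul, one_smul]
    abel
  have hlow := (hrip _ (hsupp (α + 1) (-(c * sg)))).1
  have hup := (hrip _ (hsupp (α - 1) (c * sg))).2
  rw [h1, hl2] at hlow
  rw [h2, hl2] at hup
  have hsq_neg : (-(c * sg)) ^ 2 = c ^ 2 * sg ^ 2 := by ring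
  -- polarization
  have hpol : ‖A + B‖ ^ 2 - ‖A - B‖ ^ 2 = 4 * (inner ℝ A B : ℝ) := by
    have e1 := norm_add_sq_real A B
    have e2 := norm_sub_sq_real A B
    linarith
  have hAB : (inner ℝ A B : ℝ) = α * (‖r‖ ^ 2 - c * |ip|) := by
    have h5 : (inner ℝ r (X j) : ℝ) = ip := by rw [hip_def]; exact (real_inner_comm r (X j)).symm
    rw [hA_def, hB_def, real_inner_smul_left, inner_sub_right, real_inner_smul_right,
      real_inner_self_eq_norm_sq, h5, show c * sg * ip = c * (sg * ip) by ring, hsgip]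
  have hc2 : c ^ 2 ≤ (k0 : ℝ) * N2 := by
    refine (l1_sq_le_card_mul_l2_sq u).trans ?_
    rw [l2norm_sq, ← hN2_def]
    refine mul_le_mul_of_nonneg_right ?_ hN2
    exact_mod_cast hucard
  have key : 4 * α * (‖r‖ ^ 2 - c * |ip|) ≥
      (1 - δ) * ((α + 1) ^ 2 * N2 + (-(c * sg)) ^ 2) -
      (1 + δ) * ((α - 1) ^ 2 * N2 + (c * sg) ^ 2) := by
    nlinarith [hlow, hup, hpol, hAB]
  have hsg2' : (c * sg) ^ 2 = c ^ 2 := by rw [mul_pow, hsg2, mul_one]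
  have hsg2'' : (-(c * sg)) ^ 2 = c ^ 2 := by rw [neg_pow, mul_pow, hsg2]; ring
  rw [hsg2', hsg2''] at key
  -- conclude
  have hδα : δ * ((k0:ℝ) * N2 - c ^ 2) ≥ 0 := mul_nonneg hδ0 (by linarith)
  have hring : (1 - δ) * ((α + 1) ^ 2 * N2 + c ^ 2) - (1 + δ) * ((α - 1) ^ 2 * N2 + c ^ 2)
      = 4 * α * N2 - 2 * δ * (α ^ 2 + 1) * N2 - 2 * δ * c ^ 2 := by ring
  have key2 : 4 * α * (‖r‖ ^ 2 - c * |ip|) ≥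
      4 * α * N2 - 2 * δ * (α ^ 2 + 1) * N2 - 2 * δ * c ^ 2 := by
    rw [← hring]; linarith [key]
  have hineq : 4 * α * (N2 * (1 - δ * α)) ≤
      4 * α * N2 - 2 * δ * (α ^ 2 + 1) * N2 - 2 * δ * c ^ 2 := by
    have h7 : 4 * α * (N2 * (1 - δ * α)) = 4 * α * N2 - 4 * δ * α ^ 2 * N2 := by ring
    rw [h7, hαsq]
    linarith [hδα]
  have h8 : (0:ℝ) < 4 * α := by positivity
  exact le_of_mul_le_mul_left (by linarith [hineq, key2]) h8
/-- The span of the selected columns. -/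
def spanK (X : Fin p → EuclideanSpace ℝ (Fin n)) (A : Finset (Fin p)) :
    Submodule ℝ (EuclideanSpace ℝ (Fin n)) := Submodule.span ℝ (X '' ↑A)

lemma exists_coeff_of_mem_span (X : Fin p → EuclideanSpace ℝ (Fin n))
    {A : Finset (Fin p)} {x : EuclideanSpace ℝ (Fin n)} (hx : x ∈ spanK X A) :
    ∃ c : Fin p → ℝ, suppF c ⊆ A ∧ applyX X c = x := by
  refine Submodule.span_induction ?_ ?_ ?_ ?_ hx
  · rintro y ⟨j, hjA, rfl⟩
    refine ⟨Pi.single j 1, ?_, by rw [applyX_single, one_smul]⟩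
    intro i hi
    rw [mem_suppF] at hi
    have hij : i = j := by
      by_contra h
      exact hi (Pi.single_eq_of_ne h 1)
    subst hij
    exact Finset.mem_coe.1 hjA
  · exact ⟨0, by simp [suppF], by simp [applyX]⟩
  · rintro x y _ _ ⟨cx, hcx, rfl⟩ ⟨cy, hcy, rfl⟩
    refine ⟨cx + cy, ?_, applyX_add X cx cy⟩
    intro i hi
    rw [mem_suppF] at hi
    by_cases h1 : cx i = 0
    · have h2 : cy i ≠ 0 := by
        intro h2; exact hi (by simp [Pi.add_apply, h1, h2])
      exact hcy (mem_suppF.2 h2)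
    · exact hcx (mem_suppF.2 h1)
  · rintro t x _ ⟨cx, hcx, rfl⟩
    refine ⟨t • cx, ?_, applyX_smul X t cx⟩
    intro i hi
    rw [mem_suppF] at hi
    refine hcx (mem_suppF.2 fun h => hi ?_)
    simp [Pi.smul_apply, h]

lemma applyX_mem_span (X : Fin p → EuclideanSpace ℝ (Fin n)) {b : Fin p → ℝ}
    {A : Finset (Fin p)} (h : suppF b ⊆ A) : applyX X b ∈ spanK X A := by
  rw [applyX]
  refine Submodule.sum_mem _ fun j _ => ?_
  by_cases hj : b j = 0
  · simp [hj]
  · exact Submodule.smul_mem _ _ (Submodule.subset_span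
      ⟨j, Finset.mem_coe.2 (h (mem_suppF.2 hj)), rfl⟩)

lemma norm_sub_orthProj_le (K : Submodule ℝ (EuclideanSpace ℝ (Fin n)))
    (y v : EuclideanSpace ℝ (Fin n)) (hv : v ∈ K) :
    ‖y - ↑(Submodule.orthogonalProjectionOnto K y)‖ ≤ ‖y - v‖ := by
  set q : EuclideanSpace ℝ (Fin n) := ↑(Submodule.orthogonalProjectionOnto K y) with hq
  have horth : y - q ∈ Kᗮ := by
    have := K.sub_starProjection_mem_orthogonal y; rwa [Submodule.starProjection_apply] at this
  have hmem : q - v ∈ K := Submodule.sub_mem _ (SetLike.coe_mem _) hv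
  have hinner : (inner ℝ (y - q) (q - v) : ℝ) = 0 :=
    (Submodule.mem_orthogonal' K _).1 horth _ hmem
  have hdecomp : y - v = (y - q) + (q - v) := by abel
  have hsq : ‖y - v‖ ^ 2 = ‖y - q‖ ^ 2 + ‖q - v‖ ^ 2 := by
    rw [hdecomp, norm_add_sq_real, hinner]
    ring
  nlinarith [norm_nonneg (y - v), norm_nonneg (y - q), norm_nonneg (q - v)]

lemma inner_residual_eq_zero (X : Fin p → EuclideanSpace ℝ (Fin n))
    {A : Finset (Fin p)} {i : Fin p} (hi : i ∈ A) (y : EuclideanSpace ℝ (Fin n)) :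
    (inner ℝ (X i) (y - ↑(Submodule.orthogonalProjectionOnto (spanK X A) y)) : ℝ) = 0 := by
  have horth : y - ↑(Submodule.orthogonalProjectionOnto (spanK X A) y) ∈ (spanK X A)ᗮ := by
    have := (spanK X A).sub_starProjection_mem_orthogonal y
    rwa [Submodule.starProjection_apply] at this
  exact (Submodule.mem_orthogonal _ _).1 horth _ (Submodule.subset_span ⟨i, Finset.mem_coe.2 hi, rfl⟩)
/-- Coefficients of the projection of `Xβ` onto the span of the columns in `A`. -/
def projCoeff (X : Fin p → EuclideanSpace ℝ (Fin n)) (β : Fin p → ℝ)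
    (A : Finset (Fin p)) : Fin p → ℝ :=
  Classical.choose (exists_coeff_of_mem_span X
    (SetLike.coe_mem (Submodule.orthogonalProjectionOnto (spanK X A) (applyX X β))))

lemma projCoeff_spec (X : Fin p → EuclideanSpace ℝ (Fin n)) (β : Fin p → ℝ)
    (A : Finset (Fin p)) :
    suppF (projCoeff X β A) ⊆ A ∧
      applyX X (projCoeff X β A) =
        ↑(Submodule.orthogonalProjectionOnto (spanK X A) (applyX X β)) :=
  Classical.choose_spec (exists_coeff_of_mem_span X
    (SetLike.coe_mem (Submodule.orthogonalProjectionOnto (spanK X A) (applyX X β))))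

/-- The noiseless residual coefficient vector `u_A = β - c_A`. -/
def uvec (X : Fin p → EuclideanSpace ℝ (Fin n)) (β : Fin p → ℝ)
    (A : Finset (Fin p)) : Fin p → ℝ := β - projCoeff X β A

/-- The noiseless correlation gap for the partial support `A`. -/
def gapA (X : Fin p → EuclideanSpace ℝ (Fin n)) (β : Fin p → ℝ) (k0 : ℕ) (δ : ℝ)
    (A : Finset (Fin p)) : ℝ :=
  (∑ i, uvec X β A i ^ 2) * (1 - δ * Real.sqrt ((k0 : ℝ) + 1)) /
    (∑ i ∈ suppF (uvec X β A), |uvec X β A i|)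

lemma uvec_not_mem_eq (X : Fin p → EuclideanSpace ℝ (Fin n)) (β : Fin p → ℝ)
    {A : Finset (Fin p)} {i : Fin p} (hi : i ∉ A) : uvec X β A i = β i := by
  have h0 : projCoeff X β A i = 0 := by
    by_contra h
    exact hi ((projCoeff_spec X β A).1 (mem_suppF.2 h))
  simp [uvec, h0]

lemma suppF_uvec_subset (X : Fin p → EuclideanSpace ℝ (Fin n)) (β : Fin p → ℝ)
    {A : Finset (Fin p)} (hAS : A ⊆ suppF β) : suppF (uvec X β A) ⊆ suppF β := by
  intro i hi
  rw [mem_suppF] at hi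
  by_cases hiA : i ∈ A
  · exact hAS hiA
  · rw [mem_suppF]
    intro h
    exact hi (by rw [uvec_not_mem_eq X β hiA, h])

lemma applyX_uvec (X : Fin p → EuclideanSpace ℝ (Fin n)) (β : Fin p → ℝ)
    (A : Finset (Fin p)) :
    applyX X (uvec X β A) =
      applyX X β - ↑(Submodule.orthogonalProjectionOnto (spanK X A) (applyX X β)) := by
  rw [uvec, applyX_sub, (projCoeff_spec X β A).2]

section StepLemma

variable {n p : ℕ} {X : Fin p → EuclideanSpace ℝ (Fin n)} {k0 : ℕ} {β : Fin p → ℝ}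
  {δ : ℝ} {A : Finset (Fin p)}

lemma uvec_supp_nonempty (hAS : A ⊆ suppF β) (hAne : A ≠ suppF β) :
    ∃ i ∈ suppF (uvec X β A), i ∉ A := by
  obtain ⟨i, hiS, hiA⟩ := Finset.exists_of_ssubset (ssubset_of_subset_of_ne hAS hAne)
  refine ⟨i, ?_, hiA⟩
  rw [mem_suppF, uvec_not_mem_eq X β hiA]
  exact mem_suppF.1 hiS

lemma uvec_N2_pos (hAS : A ⊆ suppF β) (hAne : A ≠ suppF β) :
    0 < ∑ i, uvec X β A i ^ 2 := by
  obtain ⟨i, hi, -⟩ := uvec_supp_nonempty hAS hAne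
  have h1 : 0 < uvec X β A i ^ 2 := pow_two_pos_of_ne_zero (mem_suppF.1 hi)
  have h2 : uvec X β A i ^ 2 ≤ ∑ j, uvec X β A j ^ 2 :=
    Finset.single_le_sum (f := fun j => uvec X β A j ^ 2) (fun j _ => sq_nonneg _)
      (Finset.mem_univ i)
  linarith

lemma uvec_l1_pos (hAS : A ⊆ suppF β) (hAne : A ≠ suppF β) :
    0 < ∑ i ∈ suppF (uvec X β A), |uvec X β A i| := by
  obtain ⟨i, hi, -⟩ := uvec_supp_nonempty hAS hAne
  have h1 : 0 < |uvec X β A i| := abs_pos.2 (mem_suppF.1 hi)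
  have h2 : |uvec X β A i| ≤ ∑ j ∈ suppF (uvec X β A), |uvec X β A j| :=
    Finset.single_le_sum (f := fun j => |uvec X β A j|) (fun j _ => abs_nonneg _) hi
  linarith

lemma one_le_sqrt_k1 (k0 : ℕ) : 1 ≤ Real.sqrt ((k0 : ℝ) + 1) := by
  have h := Real.sqrt_le_sqrt (show (1:ℝ) ≤ (k0:ℝ) + 1 by
    have : (0:ℝ) ≤ (k0:ℝ) := Nat.cast_nonneg _
    linarith)
  rwa [Real.sqrt_one] at h

lemma gapA_pos (hδ0 : 0 ≤ δ) (hδ1 : δ * Real.sqrt ((k0 : ℝ) + 1) < 1)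
    (hAS : A ⊆ suppF β) (hAne : A ≠ suppF β) : 0 < gapA X β k0 δ A := by
  refine div_pos (mul_pos (uvec_N2_pos hAS hAne) (by linarith)) (uvec_l1_pos hAS hAne)

lemma uvec_norm_sq_ge (hβcard : (suppF β).card = k0) (hδ : δ ∈ ripSet X (k0 + 1))
    (hAS : A ⊆ suppF β) :
    (1 - δ) * (∑ i, uvec X β A i ^ 2) ≤ ‖applyX X (uvec X β A)‖ ^ 2 := by
  have hcard : (suppF (uvec X β A)).card ≤ k0 + 1 := by
    have := Finset.card_le_card (suppF_uvec_subset X β hAS)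
    omega
  have := (hδ.2 _ hcard).1
  rwa [l2norm_sq] at this

/-- The key step lemma: under the sharp RIC condition and small noise, OMP selects a
new correct index. -/
lemma omp_step (hX : ∀ j, ‖X j‖ = 1) (hβcard : (suppF β).card = k0)
    (hδ : δ ∈ ripSet X (k0 + 1)) (hδ1 : δ * Real.sqrt ((k0 : ℝ) + 1) < 1)
    (hAS : A ⊆ suppF β) (hAne : A ≠ suppF β) (w : EuclideanSpace ℝ (Fin n))
    (hw : 2 * ‖w‖ < gapA X β k0 δ A) (τ : Fin p)
    (hτ : ∀ j : Fin p,
      |(inner ℝ (X j) ((applyX X β + w) -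
          ↑(Submodule.orthogonalProjectionOnto (spanK X A) (applyX X β + w))) : ℝ)| ≤
        |(inner ℝ (X τ) ((applyX X β + w) -
          ↑(Submodule.orthogonalProjectionOnto (spanK X A) (applyX X β + w))) : ℝ)|) :
    τ ∈ suppF β ∧ τ ∉ A := by
  obtain ⟨hδ0, hrip⟩ := hδ
  set α := Real.sqrt ((k0 : ℝ) + 1) with hα_def
  set u := uvec X β A with hu_def
  set y := applyX X β + w with hy_def
  set r : EuclideanSpace ℝ (Fin n) :=
    y - ↑(Submodule.orthogonalProjectionOnto (spanK X A) y) with hr_def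
  have hsuppu : suppF u ⊆ suppF β := suppF_uvec_subset X β hAS
  have hucard : (suppF u).card ≤ k0 := hβcard ▸ Finset.card_le_card hsuppu
  obtain ⟨iw, hiw, -⟩ := uvec_supp_nonempty hAS hAne
  have hne : (suppF u).Nonempty := ⟨iw, hiw⟩
  set N2 := ∑ i, u i ^ 2 with hN2_def
  set l1 := ∑ i ∈ suppF u, |u i| with hl1_def
  have hN2pos : 0 < N2 := uvec_N2_pos hAS hAne
  have hl1pos : 0 < l1 := uvec_l1_pos hAS hAne
  have hgp : gapA X β k0 δ A = N2 * (1 - δ * α) / l1 := rfl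
  set gp := N2 * (1 - δ * α) / l1 with hgp_def
  have hgp_l1 : gp * l1 = N2 * (1 - δ * α) := div_mul_cancel₀ _ hl1pos.ne'
  rw [hgp] at hw
  have hgp_pos : 0 < gp :=
    div_pos (mul_pos hN2pos (by linarith)) hl1pos
  -- decompose the residual
  set Xu := applyX X u with hXu_def
  have hrdecomp : r = Xu + (w - ↑(Submodule.orthogonalProjectionOnto (spanK X A) w)) := by
    rw [hr_def, hy_def, hXu_def, hu_def, applyX_uvec, map_add]
    push_cast
    abel
  have hw'le : ‖w - ↑(Submodule.orthogonalProjectionOnto (spanK X A) w)‖ ≤ ‖w‖ := by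
    have := norm_sub_orthProj_le (spanK X A) w 0 (Submodule.zero_mem _)
    simpa using this
  have hpert : ∀ i : Fin p, |(inner ℝ (X i) r : ℝ) - (inner ℝ (X i) Xu : ℝ)| ≤ ‖w‖ := by
    intro i
    have h1 : (inner ℝ (X i) r : ℝ) - (inner ℝ (X i) Xu : ℝ) =
        (inner ℝ (X i) (w - ↑(Submodule.orthogonalProjectionOnto (spanK X A) w)) : ℝ) := by
      rw [hrdecomp, inner_add_right]
      ring
    rw [h1]
    refine (abs_real_inner_le_norm _ _).trans ?_
    rw [hX i, one_mul]
    exact hw'le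
  -- the noiseless maximum correlation
  set M := (suppF u).sup' hne (fun i => |(inner ℝ (X i) Xu : ℝ)|) with hM_def
  obtain ⟨i0, hi0mem, hi0⟩ := Finset.exists_mem_eq_sup' hne (fun i => |(inner ℝ (X i) Xu : ℝ)|)
  have hXu_le : ‖Xu‖ ^ 2 ≤ l1 * M := by
    have h1 : ‖Xu‖ ^ 2 = ∑ j, u j * (inner ℝ Xu (X j) : ℝ) := by
      rw [← real_inner_self_eq_norm_sq, hXu_def, inner_applyX_right]
    have h2 : ∑ j, u j * (inner ℝ Xu (X j) : ℝ) =
        ∑ j ∈ suppF u, u j * (inner ℝ Xu (X j) : ℝ) := by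
      refine (Finset.sum_subset (Finset.subset_univ _) ?_).symm
      intro i _ hi
      rw [mem_suppF, not_not] at hi
      rw [hi, zero_mul]
    have h3 : ∑ j ∈ suppF u, u j * (inner ℝ Xu (X j) : ℝ) ≤ ∑ j ∈ suppF u, |u j| * M := by
      refine Finset.sum_le_sum fun j hj => ?_
      have h4 : |(inner ℝ (X j) Xu : ℝ)| ≤ M :=
        Finset.le_sup' (fun i => |(inner ℝ (X i) Xu : ℝ)|) hj
      have habs : |(inner ℝ Xu (X j) : ℝ)| = |(inner ℝ (X j) Xu : ℝ)| := by
        rw [real_inner_comm]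
      calc u j * (inner ℝ Xu (X j) : ℝ) ≤ |u j * (inner ℝ Xu (X j) : ℝ)| := le_abs_self _
        _ = |u j| * |(inner ℝ (X j) Xu : ℝ)| := by rw [abs_mul, habs]
        _ ≤ |u j| * M := mul_le_mul_of_nonneg_left h4 (abs_nonneg _)
    rw [h1, h2, ← Finset.sum_mul] at *
    calc ∑ j ∈ suppF u, u j * (inner ℝ Xu (X j) : ℝ) ≤ (∑ j ∈ suppF u, |u j|) * M := by
          rw [Finset.sum_mul] at h3 ⊢; exact h3
      _ = l1 * M := rfl
  -- noiseless gap bound for wrong indices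
  have hwrong : ∀ j, j ∉ suppF u → |(inner ℝ (X j) Xu : ℝ)| ≤ M - gp := by
    intro j hj
    have hcore := core_ineq X k0 δ ⟨hδ0, hrip⟩ u hucard j hj
    rw [← hN2_def, ← hα_def, ← hXu_def, ← hl1_def] at hcore
    have h9 : l1 * |(inner ℝ (X j) Xu : ℝ)| ≤ l1 * (M - gp) := by nlinarith
    exact le_of_mul_le_mul_left h9 hl1pos
  -- `gp ≤ M`
  have hMge : gp ≤ M := by
    have hrip_low : (1 - δ) * N2 ≤ ‖Xu‖ ^ 2 := uvec_norm_sq_ge hβcard ⟨hδ0, hrip⟩ hAS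
    have hα1 : 1 ≤ α := one_le_sqrt_k1 k0
    have hδα : δ ≤ δ * α := le_mul_of_one_le_right hδ0 hα1
    have h10 : l1 * gp ≤ l1 * M := by nlinarith
    exact le_of_mul_le_mul_left h10 hl1pos
  -- the chosen index has large correlation
  have hchoose : M - ‖w‖ ≤ |(inner ℝ (X τ) r : ℝ)| := by
    have h11 := hτ i0
    have h12 := hpert i0
    have h13 : |(inner ℝ (X i0) Xu : ℝ)| - ‖w‖ ≤ |(inner ℝ (X i0) r : ℝ)| := by
      have := abs_sub_abs_le_abs_sub (inner ℝ (X i0) Xu : ℝ) (inner ℝ (X i0) r : ℝ)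
      rw [abs_sub_comm] at this
      linarith
    rw [← hi0] at h13
    exact le_trans h13 h11
  have hwpos : 0 ≤ ‖w‖ := norm_nonneg w
  constructor
  · -- τ ∈ suppF β
    by_contra hτS
    have hτu : τ ∉ suppF u := fun h => hτS (hsuppu h)
    have h14 := hwrong τ hτu
    have h15 := hpert τ
    have h16 : |(inner ℝ (X τ) r : ℝ)| ≤ |(inner ℝ (X τ) Xu : ℝ)| + ‖w‖ := by
      have := abs_sub_abs_le_abs_sub (inner ℝ (X τ) r : ℝ) (inner ℝ (X τ) Xu : ℝ)
      linarith
    linarith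
  · -- τ ∉ A
    intro hτA
    have h17 : (inner ℝ (X τ) r : ℝ) = 0 := inner_residual_eq_zero X hτA y
    rw [h17, abs_zero] at hchoose
    linarith

end StepLemma
section Recovery

variable {n p : ℕ} {X : Fin p → EuclideanSpace ℝ (Fin n)} {k0 : ℕ} {β : Fin p → ℝ}
  {δ : ℝ}

lemma ompSupport_zero (t : ℕ → Fin p) : ompSupport t 0 = ∅ := by simp [ompSupport]

lemma ompSupport_succ (t : ℕ → Fin p) (k : ℕ) :
    ompSupport t (k + 1) = insert (t k) (ompSupport t k) := by
  rw [ompSupport, ompSupport, Finset.range_add_one, Finset.image_insert]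

lemma omp_recovery (hX : ∀ j, ‖X j‖ = 1) (hβcard : (suppF β).card = k0)
    (hδ : δ ∈ ripSet X (k0 + 1)) (hδ1 : δ * Real.sqrt ((k0 : ℝ) + 1) < 1)
    (w : EuclideanSpace ℝ (Fin n)) (t : ℕ → Fin p)
    (homp : IsOMP X (applyX X β + w) t)
    (hw : ∀ A : Finset (Fin p), A ⊆ suppF β → A ≠ suppF β →
      2 * ‖w‖ < gapA X β k0 δ A) :
    ∀ k, k ≤ k0 → ompSupport t k ⊆ suppF β ∧ (ompSupport t k).card = k := by
  intro k
  induction k with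
  | zero => intro _; simp [ompSupport_zero]
  | succ k ih =>
    intro hk1
    obtain ⟨hsub, hcardk⟩ := ih (by omega)
    have hAne : ompSupport t k ≠ suppF β := by
      intro h
      rw [h, hβcard] at hcardk
      omega
    have hstep := omp_step hX hβcard hδ hδ1 hsub hAne w (hw _ hsub hAne) (t k) (homp k)
    constructor
    · rw [ompSupport_succ]
      exact Finset.insert_subset hstep.1 hsub
    · rw [ompSupport_succ, Finset.card_insert_of_notMem hstep.2, hcardk]

lemma omp_covers (hX : ∀ j, ‖X j‖ = 1) (hβcard : (suppF β).card = k0)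
    (hδ : δ ∈ ripSet X (k0 + 1)) (hδ1 : δ * Real.sqrt ((k0 : ℝ) + 1) < 1)
    (w : EuclideanSpace ℝ (Fin n)) (t : ℕ → Fin p)
    (homp : IsOMP X (applyX X β + w) t)
    (hw : ∀ A : Finset (Fin p), A ⊆ suppF β → A ≠ suppF β →
      2 * ‖w‖ < gapA X β k0 δ A) :
    ompSupport t k0 = suppF β := by
  obtain ⟨hsub, hcard⟩ := omp_recovery hX hβcard hδ hδ1 w t homp hw k0 le_rfl
  exact Finset.eq_of_subset_of_card_le hsub (by rw [hcard, hβcard])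

lemma kmin_eq {kmax : ℕ} (hk0 : 1 ≤ k0) (hkmax : k0 ≤ kmax)
    (hX : ∀ j, ‖X j‖ = 1) (hβcard : (suppF β).card = k0)
    (hδ : δ ∈ ripSet X (k0 + 1)) (hδ1 : δ * Real.sqrt ((k0 : ℝ) + 1) < 1)
    (w : EuclideanSpace ℝ (Fin n)) (t : ℕ → Fin p)
    (homp : IsOMP X (applyX X β + w) t)
    (hw : ∀ A : Finset (Fin p), A ⊆ suppF β → A ≠ suppF β →
      2 * ‖w‖ < gapA X β k0 δ A) :
    kmin t β kmax = (k0 : ℕ∞) := by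
  have hcov := omp_covers hX hβcard hδ hδ1 w t homp hw
  apply le_antisymm
  · exact sInf_le ⟨k0, ⟨hk0, hkmax, by rw [hcov]⟩, rfl⟩
  · refine le_sInf ?_
    rintro x ⟨k, ⟨-, -, hcovk⟩, rfl⟩
    have hk0k : k0 ≤ k := by
      by_contra h
      push_neg at h
      have h1 := (omp_recovery hX hβcard hδ hδ1 w t homp hw k h.le).2
      have h2 := Finset.card_le_card hcovk
      rw [hβcard, h1] at h2
      omega
    exact show (k0:ℕ∞) ≤ (k:ℕ∞) from Nat.cast_le.2 hk0k

lemma residual_k0_le (hX : ∀ j, ‖X j‖ = 1) (hβcard : (suppF β).card = k0)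
    (hδ : δ ∈ ripSet X (k0 + 1)) (hδ1 : δ * Real.sqrt ((k0 : ℝ) + 1) < 1)
    (w : EuclideanSpace ℝ (Fin n)) (t : ℕ → Fin p)
    (homp : IsOMP X (applyX X β + w) t)
    (hw : ∀ A : Finset (Fin p), A ⊆ suppF β → A ≠ suppF β →
      2 * ‖w‖ < gapA X β k0 δ A) :
    ‖ompResidual X (applyX X β + w) t k0‖ ≤ ‖w‖ := by
  have hcov := omp_covers hX hβcard hδ hδ1 w t homp hw
  have hmem : applyX X β ∈ spanK X (ompSupport t k0) :=
    applyX_mem_span X (by rw [hcov])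
  have h := norm_sub_orthProj_le (spanK X (ompSupport t k0)) (applyX X β + w)
    (applyX X β) hmem
  rw [add_sub_cancel_left] at h
  exact h

lemma residual_decomp (X : Fin p → EuclideanSpace ℝ (Fin n))
    (β : Fin p → ℝ) (w : EuclideanSpace ℝ (Fin n)) (t : ℕ → Fin p) (k : ℕ) :
    ompResidual X (applyX X β + w) t k =
      applyX X (uvec X β (ompSupport t k)) +
        (w - ↑(Submodule.orthogonalProjectionOnto (spanK X (ompSupport t k)) w)) := by
  show (applyX X β + w) - _ = _
  rw [applyX_uvec, map_add]
  push_cast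
  abel

lemma residual_ge (X : Fin p → EuclideanSpace ℝ (Fin n))
    (β : Fin p → ℝ) (w : EuclideanSpace ℝ (Fin n)) (t : ℕ → Fin p) (k : ℕ) :
    ‖applyX X (uvec X β (ompSupport t k))‖ - ‖w‖ ≤
      ‖ompResidual X (applyX X β + w) t k‖ := by
  have hd := residual_decomp X β w t k
  have hw' : ‖w - ↑(Submodule.orthogonalProjectionOnto (spanK X (ompSupport t k)) w)‖ ≤ ‖w‖ := by
    have := norm_sub_orthProj_le (spanK X (ompSupport t k)) w 0 (Submodule.zero_mem _)
    simpa using this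
  have h1 : ‖applyX X (uvec X β (ompSupport t k))‖ ≤
      ‖ompResidual X (applyX X β + w) t k‖ +
        ‖w - ↑(Submodule.orthogonalProjectionOnto (spanK X (ompSupport t k)) w)‖ := by
    have h2 : applyX X (uvec X β (ompSupport t k)) =
        ompResidual X (applyX X β + w) t k -
          (w - ↑(Submodule.orthogonalProjectionOnto (spanK X (ompSupport t k)) w)) := by
      rw [hd]; abel
    rw [h2]
    exact norm_sub_le _ _
  linarith

lemma uvec_applyX_pos {A : Finset (Fin p)} (hβcard : (suppF β).card = k0)
    (hδ : δ ∈ ripSet X (k0 + 1)) (hδ1 : δ * Real.sqrt ((k0 : ℝ) + 1) < 1)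
    (hAS : A ⊆ suppF β) (hAne : A ≠ suppF β) :
    0 < ‖applyX X (uvec X β A)‖ := by
  have h1 := uvec_norm_sq_ge hβcard hδ hAS
  have hN2 := uvec_N2_pos (X := X) hAS hAne
  have hα1 : 1 ≤ Real.sqrt ((k0 : ℝ) + 1) := one_le_sqrt_k1 k0
  have hδ0 := hδ.1
  have hδlt : δ < 1 := by nlinarith
  have h2 : 0 < ‖applyX X (uvec X β A)‖ ^ 2 := by nlinarith
  by_contra h
  push_neg at h
  have : ‖applyX X (uvec X β A)‖ = 0 := le_antisymm h (norm_nonneg _)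
  rw [this] at h2
  norm_num at h2

end Recovery
section Probability

instance noise_isProb (n : ℕ) (σ : ℝ) : IsProbabilityMeasure (noise n σ) :=
  haveI : ∀ _ : Fin n, IsProbabilityMeasure (gaussianReal 0 ⟨σ ^ 2, sq_nonneg σ⟩) :=
    fun _ => instIsProbabilityMeasureGaussianReal 0 _
  Measure.isProbabilityMeasure_map
    ((MeasurableEquiv.toLp 2 (Fin n → ℝ)).measurable.aemeasurable)

lemma noise_apply (n : ℕ) (σ : ℝ) (S : Set (EuclideanSpace ℝ (Fin n))) :
    noise n σ S = (Measure.pi fun _ : Fin n => gaussianReal 0 ⟨σ ^ 2, sq_nonneg σ⟩)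
      ((MeasurableEquiv.toLp 2 (Fin n → ℝ)) ⁻¹' S) :=
  MeasurableEquiv.map_apply _ _

lemma absSet_measurable (c : ℝ) : MeasurableSet {x : ℝ | c ≤ |x|} :=
  (isClosed_le continuous_const continuous_abs).measurableSet

lemma gaussian_tail_eq {σ : ℝ} (hσ : 0 < σ) (c : ℝ) :
    gaussianReal 0 ⟨σ ^ 2, sq_nonneg σ⟩ {x : ℝ | c ≤ |x|} =
      gaussianReal 0 1 {x : ℝ | c / σ ≤ |x|} := by
  have hmap := gaussianReal_map_const_mul (μ := 0) (v := 1) σ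
  rw [mul_zero, mul_one] at hmap
  rw [show gaussianReal 0 ⟨σ ^ 2, sq_nonneg σ⟩ = Measure.map (fun x => σ * x) (gaussianReal 0 1)
    from hmap.symm, Measure.map_apply (measurable_const_mul σ) (absSet_measurable c)]
  congr 1
  ext x
  simp only [Set.mem_preimage, Set.mem_setOf_eq]
  rw [abs_mul, abs_of_pos hσ, div_le_iff₀' hσ]

lemma gaussian_std_tail_tendsto :
    Tendsto (fun M : ℝ => gaussianReal 0 1 {x : ℝ | M ≤ |x|}) atTop (nhds 0) := by
  have hiInter : ⋂ M : ℝ, {x : ℝ | M ≤ |x|} = ∅ := by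
    ext x
    simp only [Set.mem_iInter, Set.mem_setOf_eq, Set.mem_empty_iff_false, iff_false,
      not_forall, not_le]
    exact ⟨|x| + 1, by linarith [abs_nonneg x]⟩
  have h := tendsto_measure_iInter_atTop (μ := gaussianReal 0 1)
    (s := fun M : ℝ => {x : ℝ | M ≤ |x|})
    (fun M => (absSet_measurable M).nullMeasurableSet)
    (fun M M' hMM' x hx => le_trans hMM' hx)
    ⟨0, measure_ne_top _ _⟩
  rw [hiInter] at h
  simpa [Function.comp_def] using h

lemma gaussian_tail_tendsto {c : ℝ} (hc : 0 < c) :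
    Tendsto (fun σ : ℝ => gaussianReal 0 ⟨σ ^ 2, sq_nonneg σ⟩ {x : ℝ | c ≤ |x|})
      (nhdsWithin 0 (Set.Ioi 0)) (nhds 0) := by
  have hdiv : Tendsto (fun σ : ℝ => c / σ) (nhdsWithin 0 (Set.Ioi 0)) atTop := by
    simp only [div_eq_mul_inv]
    exact Tendsto.const_mul_atTop hc tendsto_inv_nhdsGT_zero
  have hcomp := gaussian_std_tail_tendsto.comp hdiv
  refine Tendsto.congr' ?_ hcomp
  filter_upwards [self_mem_nhdsWithin] with σ hσ
  exact (gaussian_tail_eq hσ c).symm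

lemma pi_eval_measure {n : ℕ} (μ : Measure ℝ) [IsProbabilityMeasure μ] (i : Fin n)
    {B : Set ℝ} (hB : MeasurableSet B) :
    Measure.pi (fun _ : Fin n => μ) ((fun x : Fin n → ℝ => x i) ⁻¹' B) = μ B := by
  have h1 : (fun x : Fin n → ℝ => x i) ⁻¹' B =
      Set.pi Set.univ (Function.update (fun _ : Fin n => (Set.univ : Set ℝ)) i B) := by
    ext x
    simp only [Set.mem_preimage, Set.mem_pi, Set.mem_univ, forall_true_left]
    constructor
    · intro hx j
      by_cases hj : j = i
      · subst hj; rw [Function.update_self]; exact hx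
      · rw [Function.update_of_ne hj]; trivial
    · intro hx
      have := hx i
      rwa [Function.update_self] at this
  rw [h1, Measure.pi_pi]
  rw [Finset.prod_eq_single i (fun j _ hji => by
    rw [Function.update_of_ne hji]; exact measure_univ) (by simp)]
  rw [Function.update_self]

lemma noise_tail_le (n : ℕ) (hn : 1 ≤ n) {c : ℝ} (hc : 0 < c) (σ : ℝ) :
    noise n σ {w : EuclideanSpace ℝ (Fin n) | c ≤ ‖w‖} ≤
      (n : ℝ≥0∞) * gaussianReal 0 ⟨σ ^ 2, sq_nonneg σ⟩
        {x : ℝ | c / Real.sqrt n ≤ |x|} := by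
  rw [noise_apply]
  set c' := c / Real.sqrt n with hc'_def
  have hnpos : (0:ℝ) < Real.sqrt n := Real.sqrt_pos.2 (by exact_mod_cast hn)
  have hc' : 0 < c' := div_pos hc hnpos
  have hc'sq : c' ^ 2 = c ^ 2 / n := by
    rw [hc'_def, div_pow, Real.sq_sqrt (by positivity : (0:ℝ) ≤ (n:ℝ))]
  set B := {x : ℝ | c' ≤ |x|} with hB_def
  have hsub : ((MeasurableEquiv.toLp 2 (Fin n → ℝ)) ⁻¹'
      {w : EuclideanSpace ℝ (Fin n) | c ≤ ‖w‖}) ⊆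
      ⋃ i : Fin n, (fun x : Fin n → ℝ => x i) ⁻¹' B := by
    intro x hx
    simp only [Set.mem_preimage, Set.mem_setOf_eq] at hx
    by_contra hmem
    simp only [Set.mem_iUnion, Set.mem_preimage, hB_def, Set.mem_setOf_eq, not_exists,
      not_le] at hmem
    have hnorm : ‖(MeasurableEquiv.toLp 2 (Fin n → ℝ)) x‖ =
        Real.sqrt (∑ i, ‖x i‖ ^ 2) := by
      rw [EuclideanSpace.norm_eq]
      exact congrArg Real.sqrt (Finset.sum_congr rfl fun i _ => rfl)
    have hne : (Finset.univ : Finset (Fin n)).Nonempty := by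
      haveI : NeZero n := ⟨by omega⟩
      exact Finset.univ_nonempty
    have hsum : ∑ i, ‖x i‖ ^ 2 < ∑ _i : Fin n, c' ^ 2 := by
      refine Finset.sum_lt_sum_of_nonempty hne fun i _ => ?_
      rw [Real.norm_eq_abs]
      exact pow_lt_pow_left₀ (hmem i) (abs_nonneg _) (two_ne_zero)
    rw [Finset.sum_const, Finset.card_univ, Fintype.card_fin, nsmul_eq_mul, hc'sq] at hsum
    have hnR : (0:ℝ) < (n:ℝ) := by exact_mod_cast Nat.lt_of_lt_of_le Nat.zero_lt_one hn
    have hsum2 : ∑ i, ‖x i‖ ^ 2 < c ^ 2 := by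
      rwa [mul_div_cancel₀ _ hnR.ne'] at hsum
    have hcsq : c ^ 2 ≤ ∑ i, ‖x i‖ ^ 2 := by
      have h2 : c ^ 2 ≤ Real.sqrt (∑ i, ‖x i‖ ^ 2) ^ 2 := by
        refine pow_le_pow_left₀ hc.le ?_ 2
        rw [← hnorm]; exact hx
      rwa [Real.sq_sqrt (by positivity)] at h2
    linarith
  refine (measure_mono hsub).trans ?_
  refine (measure_iUnion_fintype_le _ _).trans ?_
  have heach : ∀ i : Fin n, (Measure.pi fun _ : Fin n =>
      gaussianReal 0 ⟨σ ^ 2, sq_nonneg σ⟩) ((fun x : Fin n → ℝ => x i) ⁻¹' B) =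
      gaussianReal 0 ⟨σ ^ 2, sq_nonneg σ⟩ B := fun i =>
    @pi_eval_measure _ _ (instIsProbabilityMeasureGaussianReal 0 _) i _ (absSet_measurable c')
  rw [Finset.sum_congr rfl fun i _ => heach i, Finset.sum_const, Finset.card_univ,
    Fintype.card_fin, nsmul_eq_mul]

lemma noise_tail_tendsto (n : ℕ) (hn : 1 ≤ n) {c : ℝ} (hc : 0 < c) :
    Tendsto (fun σ : ℝ => noise n σ {w : EuclideanSpace ℝ (Fin n) | c ≤ ‖w‖})
      (nhdsWithin 0 (Set.Ioi 0)) (nhds 0) := by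
  have hnpos : (0:ℝ) < Real.sqrt n := Real.sqrt_pos.2 (by exact_mod_cast hn)
  have hc' : 0 < c / Real.sqrt n := div_pos hc hnpos
  have h1 := ENNReal.Tendsto.const_mul (a := (n : ℝ≥0∞)) (gaussian_tail_tendsto hc')
    (Or.inr (ENNReal.natCast_ne_top n))
  rw [mul_zero] at h1
  refine tendsto_of_tendsto_of_tendsto_of_le_of_le tendsto_const_nhds h1
    (fun σ => zero_le) (fun σ => noise_tail_le n hn hc σ)

lemma noise_ball_toReal_tendsto (n : ℕ) (hn : 1 ≤ n) {c : ℝ} (hc : 0 < c) :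
    Tendsto (fun σ : ℝ =>
      (noise n σ {w : EuclideanSpace ℝ (Fin n) | ‖w‖ < c}).toReal)
      (nhdsWithin 0 (Set.Ioi 0)) (nhds 1) := by
  have hmeas : MeasurableSet {w : EuclideanSpace ℝ (Fin n) | c ≤ ‖w‖} :=
    (isClosed_le continuous_const continuous_norm).measurableSet
  have hcompl : ∀ σ : ℝ, noise n σ {w : EuclideanSpace ℝ (Fin n) | ‖w‖ < c} =
      1 - noise n σ {w : EuclideanSpace ℝ (Fin n) | c ≤ ‖w‖} := by
    intro σ
    have h1 : {w : EuclideanSpace ℝ (Fin n) | ‖w‖ < c} =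
        {w : EuclideanSpace ℝ (Fin n) | c ≤ ‖w‖}ᶜ := by
      ext w; simp [not_le]
    rw [h1, prob_compl_eq_one_sub hmeas]
  have htail := noise_tail_tendsto n hn hc
  have htailR : Tendsto (fun σ : ℝ =>
      (noise n σ {w : EuclideanSpace ℝ (Fin n) | c ≤ ‖w‖}).toReal)
      (nhdsWithin 0 (Set.Ioi 0)) (nhds 0) := by
    have h2 := (ENNReal.tendsto_toReal (by norm_num : (0:ℝ≥0∞) ≠ ⊤)).comp htail
    simpa [Function.comp_def] using h2
  have h3 : Tendsto (fun σ : ℝ => 1 -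
      (noise n σ {w : EuclideanSpace ℝ (Fin n) | c ≤ ‖w‖}).toReal)
      (nhdsWithin 0 (Set.Ioi 0)) (nhds 1) := by
    have := htailR.const_sub 1
    simpa using this
  refine h3.congr fun σ => ?_
  rw [hcompl σ, ENNReal.toReal_sub_of_le prob_le_one (by norm_num), ENNReal.toReal_one]

/-- If an event contains a small ball around the origin, its probability tends to `1`. -/
lemma noise_event_tendsto_one (n : ℕ) (hn : 1 ≤ n) {c : ℝ} (hc : 0 < c)
    (E : Set (EuclideanSpace ℝ (Fin n)))
    (hE : {w : EuclideanSpace ℝ (Fin n) | ‖w‖ < c} ⊆ E) :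
    Tendsto (fun σ : ℝ => (noise n σ E).toReal)
      (nhdsWithin 0 (Set.Ioi 0)) (nhds 1) := by
  refine tendsto_of_tendsto_of_tendsto_of_le_of_le
    (noise_ball_toReal_tendsto n hn hc) tendsto_const_nhds
    (fun σ => ?_) (fun σ => ?_)
  · exact ENNReal.toReal_mono (measure_ne_top _ _) (measure_mono hE)
  · have := prob_le_one (μ := noise n σ) (s := E)
    calc (noise n σ E).toReal ≤ (1 : ℝ≥0∞).toReal :=
      ENNReal.toReal_mono (by norm_num) this
      _ = 1 := by norm_num

end Probability

/-- If `δ_{k0+1} < 1/√(k0+1)`, then `P(k_min = k0) → 1` as `σ → 0⁺`,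
and `RR(k0) → 0` in probability as `σ → 0⁺`. -/
theorem statement_5 {n p k0 kmax : ℕ} (hnp : n < p) (hk0 : 1 ≤ k0)
    (hkmax : k0 ≤ kmax) (hkmaxn : kmax < n)
    (X : Fin p → EuclideanSpace ℝ (Fin n)) (hX : ∀ j, ‖X j‖ = 1)
    (β : Fin p → ℝ) (hβ : (suppF β).card = k0)
    (T : EuclideanSpace ℝ (Fin n) → ℕ → Fin p)
    (hT : ∀ w, IsOMP X (applyX X β + w) (T w))
    (hRIC : RIC X (k0 + 1) < 1 / Real.sqrt ((k0 : ℝ) + 1)) :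
    Filter.Tendsto
        (fun σ : ℝ => (noise n σ {w | kmin (T w) β kmax = (k0 : ℕ∞)}).toReal)
        (nhdsWithin 0 (Set.Ioi 0)) (nhds 1) ∧
      ∀ ε : ℝ, 0 < ε →
        Filter.Tendsto
          (fun σ : ℝ =>
            (noise n σ {w | resRatio X (applyX X β + w) (T w) k0 < ε}).toReal)
          (nhdsWithin 0 (Set.Ioi 0)) (nhds 1) := by
  -- setup
  classical
  have hn1 : 1 ≤ n := by omega
  have hk01 : 1 ≤ k0 + 1 := by omega
  obtain ⟨δ, hδmem, hδlt⟩ := exists_rip_lt X hX hk01 hRIC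
  have hsq_pos : 0 < Real.sqrt ((k0 : ℝ) + 1) := Real.sqrt_pos.2 (by positivity)
  have hδ1 : δ * Real.sqrt ((k0 : ℝ) + 1) < 1 := by
    have h := (lt_div_iff₀ hsq_pos).1 hδlt
    linarith
  have hδ0 := hδmem.1
  -- the finite family of strict subsets of the support
  set S := suppF β with hS_def
  set 𝒜 : Finset (Finset (Fin p)) := S.powerset.erase S with h𝒜_def
  have h𝒜ne : 𝒜.Nonempty := by
    refine ⟨∅, Finset.mem_erase.2 ⟨?_, Finset.empty_mem_powerset S⟩⟩
    intro h
    rw [← h] at hβ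
    simp at hβ
    omega
  have h𝒜mem : ∀ A ∈ 𝒜, A ⊆ S ∧ A ≠ S := by
    intro A hA
    rw [h𝒜_def, Finset.mem_erase, Finset.mem_powerset] at hA
    exact ⟨hA.2, hA.1⟩
  set g0 := 𝒜.inf' h𝒜ne (gapA X β k0 δ) with hg0_def
  have hg0pos : 0 < g0 := by
    rw [hg0_def, Finset.lt_inf'_iff]
    intro A hA
    exact gapA_pos hδ0 hδ1 (h𝒜mem A hA).1 (h𝒜mem A hA).2
  have hg0le : ∀ A ∈ 𝒜, g0 ≤ gapA X β k0 δ A := fun A hA => Finset.inf'_le _ hA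
  set c1 := 𝒜.inf' h𝒜ne (fun A => ‖applyX X (uvec X β A)‖) with hc1_def
  have hc1pos : 0 < c1 := by
    rw [hc1_def, Finset.lt_inf'_iff]
    intro A hA
    exact uvec_applyX_pos hβ hδmem hδ1 (h𝒜mem A hA).1 (h𝒜mem A hA).2
  have hc1le : ∀ A ∈ 𝒜, c1 ≤ ‖applyX X (uvec X β A)‖ := fun A hA =>
    Finset.inf'_le _ hA
  -- small noise gives the gap condition
  have hgap : ∀ w : EuclideanSpace ℝ (Fin n), ‖w‖ < g0 / 4 →
      ∀ A : Finset (Fin p), A ⊆ suppF β → A ≠ suppF β →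
        2 * ‖w‖ < gapA X β k0 δ A := by
    intro w hw A hAS hAne
    have hA𝒜 : A ∈ 𝒜 := Finset.mem_erase.2 ⟨hAne, Finset.mem_powerset.2 hAS⟩
    have := hg0le A hA𝒜
    linarith
  constructor
  · -- Part 1: P(kmin = k0) → 1
    refine noise_event_tendsto_one n hn1 (div_pos hg0pos (by norm_num : (0:ℝ) < 4)) _ ?_
    intro w hw
    simp only [Set.mem_setOf_eq] at hw ⊢
    exact kmin_eq hk0 hkmax hX hβ hδmem hδ1 w (T w) (hT w) (hgap w hw)
  · -- Part 2: RR(k0) → 0 in probability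
    intro ε hε
    set ε0 := min (g0 / 4) (min (c1 / 2) (ε * c1 / 4)) with hε0_def
    have hε0pos : 0 < ε0 :=
      lt_min (div_pos hg0pos (by norm_num : (0:ℝ) < 4))
        (lt_min (div_pos hc1pos (by norm_num : (0:ℝ) < 2))
          (div_pos (mul_pos hε hc1pos) (by norm_num : (0:ℝ) < 4)))
    refine noise_event_tendsto_one n hn1 hε0pos _ ?_
    intro w hw
    simp only [Set.mem_setOf_eq] at hw ⊢
    have hwg : ‖w‖ < g0 / 4 := lt_of_lt_of_le hw (min_le_left _ _)
    have hwc : ‖w‖ < c1 / 2 :=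
      lt_of_lt_of_le hw ((min_le_right _ _).trans (min_le_left _ _))
    have hwe : ‖w‖ < ε * c1 / 4 :=
      lt_of_lt_of_le hw ((min_le_right _ _).trans (min_le_right _ _))
    have hgapw := hgap w hwg
    -- the (k0-1)-st support is a strict subset of the true support
    have hrec := omp_recovery hX hβ hδmem hδ1 w (T w) (hT w) hgapw (k0 - 1) (by omega)
    obtain ⟨hsub, hcard⟩ := hrec
    have hAne : ompSupport (T w) (k0 - 1) ≠ suppF β := by
      intro h
      rw [h, hβ] at hcard
      omega
    have hA𝒜 : ompSupport (T w) (k0 - 1) ∈ 𝒜 :=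
      Finset.mem_erase.2 ⟨hAne, Finset.mem_powerset.2 hsub⟩
    -- lower bound on the previous residual
    have hlow0 := residual_ge X β w (T w) (k0 - 1)
    have hlow : c1 - ‖w‖ ≤ ‖ompResidual X (applyX X β + w) (T w) (k0 - 1)‖ := by
      have := hc1le _ hA𝒜
      linarith
    have hrpos : 0 < ‖ompResidual X (applyX X β + w) (T w) (k0 - 1)‖ := by linarith
    -- upper bound on the current residual
    have hup := residual_k0_le hX hβ hδmem hδ1 w (T w) (hT w) hgapw
    -- conclude
    have hRR : resRatio X (applyX X β + w) (T w) k0 =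
        ‖ompResidual X (applyX X β + w) (T w) k0‖ /
          ‖ompResidual X (applyX X β + w) (T w) (k0 - 1)‖ := rfl
    rw [hRR, div_lt_iff₀ hrpos]
    have h_a : ε * (c1 - ‖w‖) ≤
        ε * ‖ompResidual X (applyX X β + w) (T w) (k0 - 1)‖ :=
      mul_le_mul_of_nonneg_left hlow hε.le
    have h_b : ε * ‖w‖ ≤ ε * (c1 / 2) := mul_le_mul_of_nonneg_left hwc.le hε.le
    have h_c : 0 < ε * c1 := mul_pos hε hc1pos
    nlinarith [h_a, h_b, h_c, hup, hwe]

end RRTPaper
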